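/- arXiv:1703.08816 — 2 statements merged into one kernel-verified Lean document; each statement's English description precedes it below -/
import Mathlib

section
/- For all real x, the standard normal cdf Ψ(x) = (1/√(2π)) ∫_{-∞}^x e^{-t²/2} dt satisfies Ψ''(x)·Ψ(x) − (Ψ'(x))² < 0. -/
open Real MeasureTheory Set Filter

noncomputable def gf : ℝ → ℝ := fun t => Real.exp (-t ^ 2 / 2)

lemma gf_cont : Continuous gf := by
  apply Real.continuous_exp.comp
  continuity

lemma gf_pos (t : ℝ) : 0 < gf t := Real.exp_pos _

lemma gf_eq (t : ℝ) : gf t = Real.exp (-(1/2) * t ^ 2) := by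
  unfold gf; ring_nf

lemma gf_int : Integrable gf := by
  have h := integrable_exp_neg_mul_sq (by norm_num : (0:ℝ) < 1/2)
  exact h.congr (Filter.Eventually.of_forall fun t => (gf_eq t).symm)

lemma tgf_int : Integrable (fun t => t * gf t) := by
  have h := integrable_mul_exp_neg_mul_sq (by norm_num : (0:ℝ) < 1/2)
  exact h.congr (Filter.Eventually.of_forall fun t => by simp only [gf_eq])

lemma neg_gf_deriv (t : ℝ) : HasDerivAt (fun t => -gf t) (t * gf t) t := by
  have h1 : HasDerivAt (fun t : ℝ => -t ^ 2 / 2) (-t) t := by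
    have := ((hasDerivAt_pow 2 t).neg).div_const 2
    simpa using this.congr_deriv (by push_cast; ring)
  have h2 := (h1.exp).neg
  exact h2.congr_deriv (by simp only [gf]; ring)

lemma gf_tendsto : Tendsto gf atBot (nhds 0) := by
  have h1 : Tendsto (fun t : ℝ => t ^ 2) atBot atTop := by
    have := (tendsto_pow_atTop (n := 2) (by norm_num : (2:ℕ) ≠ 0) : Tendsto (fun x : ℝ => x ^ 2) atTop atTop).comp (tendsto_neg_atBot_atTop : Tendsto (fun x : ℝ => -x) atBot atTop)
    exact this.congr fun t => by simp
  have h2 : Tendsto (fun t : ℝ => -t ^ 2 / 2) atBot atBot := by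
    have := tendsto_neg_atTop_atBot.comp (h1.atTop_div_const (by norm_num : (0:ℝ) < 2))
    exact this.congr fun t => by simp [Function.comp]; ring
  exact Real.tendsto_exp_atBot.comp h2

lemma integral_t_gf (x : ℝ) : ∫ t in Iic x, t * gf t = -gf x := by
  have := integral_Iic_of_hasDerivAt_of_tendsto' (a := x)
    (f := fun t => -gf t) (f' := fun t => t * gf t) (m := 0)
    (fun t _ => neg_gf_deriv t) tgf_int.integrableOn ?_
  · simpa using this
  · simpa using Filter.Tendsto.neg gf_tendsto

lemma gf_integral_pos (x : ℝ) : 0 < ∫ t in Iic x, gf t := by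
  rw [setIntegral_pos_iff_support_of_nonneg_ae
    (Filter.Eventually.of_forall fun t => (gf_pos t).le) gf_int.integrableOn]
  have : Function.support gf ∩ Iic x = Iic x := by
    apply inter_eq_right.2
    intro t _; exact (gf_pos t).ne'
  rw [this]
  simp [Real.volume_Iic]

/-- Mills ratio strict bound for x < 0 : (-x) * ∫ < gf x -/
lemma mills (x : ℝ) (hx : x < 0) : (-x) * ∫ t in Iic x, gf t < gf x := by
  have hint : IntegrableOn (fun t => (x - t) * gf t) (Iic x) := by
    refine ((gf_int.const_mul x).sub tgf_int).integrableOn.congr_fun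
      (fun t _ => by simp; ring) measurableSet_Iic
  have hA : 0 < ∫ t in Iic x, (x - t) * gf t := by
    rw [setIntegral_pos_iff_support_of_nonneg_ae]
    · have hsub : Iio x ⊆ Function.support (fun t => (x - t) * gf t) ∩ Iic x := by
        intro t ht
        have ht' : t < x := ht
        refine ⟨?_, le_of_lt ht'⟩
        have : 0 < (x - t) * gf t := mul_pos (by linarith) (gf_pos t)
        exact this.ne'
      refine lt_of_lt_of_le ?_ (measure_mono hsub)
      simp [Real.volume_Iio]
    · rw [Filter.EventuallyLE, ae_restrict_iff' measurableSet_Iic]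
      filter_upwards with t ht
      have ht' : t ≤ x := ht
      exact mul_nonneg (by linarith) (gf_pos t).le
    · exact hint
  have hsplit : ∫ t in Iic x, (x - t) * gf t
      = x * (∫ t in Iic x, gf t) - ∫ t in Iic x, t * gf t := by
    rw [← integral_const_mul, ← integral_sub (gf_int.const_mul x).integrableOn
      tgf_int.integrableOn]
    congr 1; ext t; ring
  rw [hsplit, integral_t_gf] at hA
  linarith

lemma psi_hasDeriv (Ψ : ℝ → ℝ)
    (hΨ : ∀ x, Ψ x = (Real.sqrt (2 * Real.pi))⁻¹ * ∫ t in Set.Iic x, Real.exp (-t ^ 2 / 2))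
    (x : ℝ) : HasDerivAt Ψ ((Real.sqrt (2 * Real.pi))⁻¹ * gf x) x := by
  set c := (Real.sqrt (2 * Real.pi))⁻¹
  have hfun : Ψ = fun u => c * ((∫ t in Iic (0:ℝ), gf t) + ∫ t in (0:ℝ)..u, gf t) := by
    funext u
    rw [hΨ u, show (∫ t in Set.Iic u, Real.exp (-t ^ 2 / 2)) = ∫ t in Iic u, gf t from rfl]
    rw [← intervalIntegral.integral_Iic_sub_Iic gf_int.integrableOn gf_int.integrableOn]
    ring
  rw [hfun]
  have h : HasDerivAt (fun u => ∫ t in (0:ℝ)..u, gf t) (gf x) x :=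
    intervalIntegral.integral_hasDerivAt_right gf_int.intervalIntegrable
      gf_cont.aestronglyMeasurable.stronglyMeasurableAtFilter gf_cont.continuousAt
  exact (h.const_add _).const_mul c

theorem stmt_0 (Ψ : ℝ → ℝ)
    (hΨ : ∀ x, Ψ x = (Real.sqrt (2 * Real.pi))⁻¹ * ∫ t in Set.Iic x, Real.exp (-t ^ 2 / 2)) :
    ∀ x : ℝ, deriv (deriv Ψ) x * Ψ x - (deriv Ψ x) ^ 2 < 0 := by
  intro x
  set c := (Real.sqrt (2 * Real.pi))⁻¹ with hc
  have hcpos : 0 < c := by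
    rw [hc]
    positivity
  have hd1 : deriv Ψ = fun u => c * gf u := funext fun u => (psi_hasDeriv Ψ hΨ u).deriv
  have hd1x : deriv Ψ x = c * gf x := by rw [hd1]
  have hd2 : deriv (deriv Ψ) x = c * (-x * gf x) := by
    rw [hd1]
    have h1 : HasDerivAt (fun t : ℝ => -t ^ 2 / 2) (-x) x := by
      have := ((hasDerivAt_pow 2 x).neg).div_const 2
      simpa using this.congr_deriv (by push_cast; ring)
    have h2 : HasDerivAt gf (-x * gf x) x := by
      exact h1.exp.congr_deriv (by simp only [gf]; ring)
    exact ((h2.const_mul c).congr_deriv (by ring)).deriv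
  rw [hd2, hd1x, hΨ x]
  have hI : (∫ t in Set.Iic x, Real.exp (-t ^ 2 / 2)) = ∫ t in Iic x, gf t := rfl
  rw [hI]
  set I := ∫ t in Iic x, gf t with hIdef
  have hIpos : 0 < I := gf_integral_pos x
  have hgf := gf_pos x
  have key : -x * I - gf x < 0 := by
    rcases le_or_gt 0 x with hx | hx
    · nlinarith [mul_nonneg hx hIpos.le]
    · linarith [mills x hx]
  calc c * (-x * gf x) * (c * I) - (c * gf x) ^ 2
      = (c * c * gf x) * (-x * I - gf x) := by ring
    _ < 0 := mul_neg_of_pos_of_neg (by positivity) key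
end

section
/- The function x ↦ log Ψ(x), where Ψ is the standard normal cdf, is strictly concave on ℝ. -/
open Real MeasureTheory Set Filter

noncomputable def phi (t : ℝ) : ℝ := Real.exp (-t ^ 2 / 2)

lemma phi_pos (t : ℝ) : 0 < phi t := Real.exp_pos _

lemma phi_eq : phi = fun t => Real.exp (-(1/2 : ℝ) * t ^ 2) := by
  funext t; unfold phi; congr 1; ring

lemma phi_integrable : Integrable phi := by
  rw [phi_eq]; exact integrable_exp_neg_mul_sq (by norm_num)

lemma mul_phi_integrable : Integrable (fun t => t * phi t) := by
  rw [phi_eq]; exact integrable_mul_exp_neg_mul_sq (by norm_num)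

lemma phi_hasDerivAt (t : ℝ) : HasDerivAt phi (-t * phi t) t := by
  have h : HasDerivAt (fun s : ℝ => -s ^ 2 / 2) (-(2 * t ^ 1) / 2) t :=
    ((hasDerivAt_pow 2 t).neg).div_const 2
  have h' : HasDerivAt (fun s : ℝ => -s ^ 2 / 2) (-t) t := by
    convert h using 1; ring
  have h2 := h'.exp
  unfold phi
  simpa [mul_comm] using h2

lemma phi_tendsto_atBot : Tendsto phi atBot (nhds 0) := by
  have h1 : Tendsto (fun t : ℝ => t ^ 2) atBot atTop := by
    apply tendsto_atTop_mono' atBot _ tendsto_neg_atBot_atTop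
    filter_upwards [eventually_le_atBot (-1 : ℝ)] with t ht
    nlinarith
  have h2 : Tendsto (fun t : ℝ => -t ^ 2 / 2) atBot atBot := by
    have h3 := h1.atTop_div_const (by norm_num : (0:ℝ) < 2)
    have h4 := tendsto_neg_atTop_atBot.comp h3
    have h5 : (fun t : ℝ => -t ^ 2 / 2) = (Neg.neg ∘ fun t : ℝ => t ^ 2 / 2) := by
      funext t; simp [Function.comp, neg_div]
    rw [h5]; exact h4
  exact Real.tendsto_exp_atBot.comp h2

lemma neg_mul_phi_integrable : Integrable (fun t : ℝ => -t * phi t) := by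
  have : (fun t : ℝ => -t * phi t) = fun t => -(t * phi t) := by funext t; ring
  rw [this]; exact mul_phi_integrable.neg

lemma integral_neg_mul_phi (x : ℝ) : ∫ t in Iic x, (-t) * phi t = phi x := by
  have h := integral_Iic_of_hasDerivAt_of_tendsto' (a := x) (f := phi)
    (f' := fun t => -t * phi t) (fun t _ => phi_hasDerivAt t)
    neg_mul_phi_integrable.integrableOn phi_tendsto_atBot
  rw [h, sub_zero]

lemma integral_phi_pos (x : ℝ) : 0 < ∫ t in Iic x, phi t := by
  rw [setIntegral_pos_iff_support_of_nonneg_ae]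
  · have : Function.support phi ∩ Iic x = Iic x := by
      apply inter_eq_right.2
      intro t _
      exact (phi_pos t).ne'
    rw [this]
    simp
  · exact Eventually.of_forall fun t => (phi_pos t).le
  · exact phi_integrable.integrableOn

lemma key_ineq (x : ℝ) : 0 < x * (∫ t in Iic x, phi t) + phi x := by
  rcases le_or_gt 0 x with hx | hx
  · have := integral_phi_pos x
    nlinarith [phi_pos x]
  · -- show (-x) * ∫ < phi x
    have hint1 : IntegrableOn (fun t => (-t) * phi t) (Iic x) :=
      neg_mul_phi_integrable.integrableOn
    have hint2 : IntegrableOn (fun t => (-x) * phi t) (Iic x) :=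
      (phi_integrable.const_mul _).integrableOn
    have hlt : 0 < ∫ t in Iic x, ((-t) * phi t - (-x) * phi t) := by
      rw [setIntegral_pos_iff_support_of_nonneg_ae]
      · have hsub : Iio x ⊆ Function.support (fun t => (-t) * phi t - (-x) * phi t) ∩ Iic x := by
          intro t ht
          have htx : t < x := ht
          refine ⟨?_, htx.le⟩
          simp only [Function.mem_support]
          have heq2 : -t * phi t - -x * phi t = (x - t) * phi t := by ring
          rw [heq2]
          exact ne_of_gt (mul_pos (by linarith) (phi_pos t))
        refine lt_of_lt_of_le ?_ (measure_mono hsub)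
        simp
      · refine Eventually.mono (self_mem_ae_restrict measurableSet_Iic) ?_
        intro t ht
        show (0:ℝ) ≤ -t * phi t - -x * phi t
        nlinarith [phi_pos t, ht]
      · exact hint1.sub hint2
    have heq : (∫ t in Iic x, ((-t) * phi t - (-x) * phi t))
        = phi x - (-x) * ∫ t in Iic x, phi t := by
      rw [integral_sub hint1 hint2, integral_neg_mul_phi, integral_const_mul]
    rw [heq] at hlt
    linarith

theorem stmt_1 (Ψ : ℝ → ℝ)
    (hΨ : ∀ x, Ψ x = (Real.sqrt (2 * Real.pi))⁻¹ * ∫ t in Set.Iic x, Real.exp (-t ^ 2 / 2)) :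
    StrictConcaveOn ℝ Set.univ (fun x => Real.log (Ψ x)) := by
  set c : ℝ := (Real.sqrt (2 * Real.pi))⁻¹ with hc
  have hcpos : 0 < c := by
    rw [hc]
    positivity
  have hΨ' : ∀ x, Ψ x = c * ∫ t in Iic x, phi t := fun x => hΨ x
  have hΨpos : ∀ x, 0 < Ψ x := by
    intro x
    rw [hΨ' x]
    exact mul_pos hcpos (integral_phi_pos x)
  -- derivative of Ψ
  have hΨderiv : ∀ x, HasDerivAt Ψ (c * phi x) x := by
    intro x
    have hfun : Ψ = fun y => c * ((∫ t in Iic (0:ℝ), phi t) + ∫ t in (0:ℝ)..y, phi t) := by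
      funext y
      rw [hΨ' y]
      congr 1
      rw [← intervalIntegral.integral_Iic_sub_Iic phi_integrable.integrableOn phi_integrable.integrableOn]
      ring
    rw [hfun]
    have h1 : HasDerivAt (fun y => ∫ t in (0:ℝ)..y, phi t) (phi x) x := by
      apply intervalIntegral.integral_hasDerivAt_right
        (phi_integrable.intervalIntegrable)
        phi_integrable.1.stronglyMeasurableAtFilter
      exact ((Real.continuous_exp.comp (by continuity)).continuousAt)
    simpa using (h1.const_add (∫ t in Iic (0:ℝ), phi t)).const_mul c
  -- derivative of log Ψ
  set g : ℝ → ℝ := fun x => c * phi x / Ψ x with hg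
  have hlog : ∀ x, HasDerivAt (fun y => Real.log (Ψ y)) (g x) x := by
    intro x
    simpa [hg] using (hΨderiv x).log (hΨpos x).ne'
  -- derivative of g
  have hgderiv : ∀ x, HasDerivAt g
      ((c * (-x * phi x) * Ψ x - c * phi x * (c * phi x)) / Ψ x ^ 2) x := by
    intro x
    exact (((phi_hasDerivAt x).const_mul c).div (hΨderiv x) (hΨpos x).ne')
  have hgneg : ∀ x, (c * (-x * phi x) * Ψ x - c * phi x * (c * phi x)) / Ψ x ^ 2 < 0 := by
    intro x
    apply div_neg_of_neg_of_pos _ (pow_pos (hΨpos x) 2)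
    have hkey := key_ineq x
    have h1 : x * Ψ x + c * phi x > 0 := by
      rw [hΨ' x]
      have : x * (c * ∫ t in Iic x, phi t) + c * phi x
          = c * (x * (∫ t in Iic x, phi t) + phi x) := by ring
      rw [this]
      exact mul_pos hcpos hkey
    nlinarith [mul_pos (mul_pos hcpos (phi_pos x)) h1]
  apply strictConcaveOn_of_deriv2_neg convex_univ
  · exact fun x _ => ((hlog x).differentiableAt.continuousAt).continuousWithinAt
  · intro x _
    have hd1 : deriv (fun y => Real.log (Ψ y)) = g := funext fun y => (hlog y).deriv
    have : deriv^[2] (fun y => Real.log (Ψ y)) x = deriv g x := by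
      rw [Function.iterate_succ, Function.iterate_one, Function.comp_apply, hd1]
    rw [this, (hgderiv x).deriv]
    exact hgneg x
end
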